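/- There exist an absolute constant C > 0 and an absolute constant D such that for every integer d ≥ D: Σ_{⌈d^(0.99)⌉ ≤ k ≤ ⌊d^(1.01)⌋} N(d,k) · ν_d(k) ≤ C · d^(−0.455), where the sum is over all integers k with d^(0.99) ≤ k ≤ d^(1.01). -/

import Mathlib

open Real Filter

/-- Distinct eigenvalues (up to constants) of the NTK on the sphere `S^d`:
`ν_d(k) = d^d · k^(k−2) · (k+d)^(−(k+d+1)) · (k² + k·d + d)`. -/
noncomputable def nuNT (d k : ℕ) : ℝ :=
  (d : ℝ) ^ (d : ℝ) * (k : ℝ) ^ ((k : ℝ) - 2) *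
    ((k : ℝ) + (d : ℝ)) ^ (-((k : ℝ) + (d : ℝ) + 1)) *
    ((k : ℝ) ^ 2 + (k : ℝ) * (d : ℝ) + (d : ℝ))

/-- Dimension of the space of spherical harmonics of degree `k` on `S^d ⊆ ℝ^(d+1)`. -/
def Nsph (d k : ℕ) : ℕ :=
  if k = 0 then 1
  else (k + d).choose k - (if 2 ≤ k then (k + d - 2).choose (k - 2) else 0)

/-- `λ_d(0) = 1` and `λ_d(k) = ν_d(k)` for `k ≥ 1`. -/
noncomputable def lamNT (d k : ℕ) : ℝ := if k = 0 then 1 else nuNT d k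

lemma stirlingSeq_ge (m : ℕ) : Real.sqrt π ≤ Stirling.stirlingSeq (m + 1) := by
  exact Stirling.stirlingSeq'_antitone.le_of_tendsto
    (Stirling.tendsto_stirlingSeq_sqrt_pi.comp (tendsto_add_atTop_nat 1)) m

lemma stirlingSeq_le (m : ℕ) : Stirling.stirlingSeq (m + 1) ≤ Real.exp 1 / Real.sqrt 2 := by
  have := Stirling.stirlingSeq'_antitone (Nat.zero_le m)
  simpa [Stirling.stirlingSeq_one] using this

lemma fact_eq (n : ℕ) (hn : 1 ≤ n) :
    (n.factorial : ℝ) = Stirling.stirlingSeq n * (Real.sqrt (2 * n) * ((n : ℝ) / Real.exp 1) ^ n) := by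
  rw [Stirling.stirlingSeq, div_mul_cancel₀]
  have : (0:ℝ) < (n:ℝ) := by exact_mod_cast hn
  positivity

lemma stirling_lower (n : ℕ) (hn : 1 ≤ n) :
    Real.sqrt n * ((n : ℝ) / Real.exp 1) ^ n ≤ (n.factorial : ℝ) := by
  obtain ⟨m, rfl⟩ := Nat.exists_eq_add_of_le' hn
  rw [fact_eq _ (by omega)]
  have h1 := stirlingSeq_ge m
  have h2 : Real.sqrt ((m + 1 : ℕ) : ℝ) ≤ Real.sqrt (2 * (m + 1 : ℕ)) := by
    apply Real.sqrt_le_sqrt; push_cast; nlinarith [Nat.cast_nonneg (α := ℝ) m]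
  have hπ : (1:ℝ) ≤ Real.sqrt π := by
    rw [show (1:ℝ) = Real.sqrt 1 by simp]
    exact Real.sqrt_le_sqrt (by nlinarith [Real.pi_gt_three])
  have hp : (0:ℝ) ≤ (((m+1 : ℕ) : ℝ) / Real.exp 1) ^ (m+1) := by positivity
  calc Real.sqrt ((m+1 : ℕ) : ℝ) * (((m+1:ℕ) : ℝ) / Real.exp 1) ^ (m+1)
      ≤ 1 * (Real.sqrt (2 * ((m+1:ℕ):ℝ)) * (((m+1:ℕ):ℝ) / Real.exp 1) ^ (m+1)) := by
        rw [one_mul]; exact mul_le_mul_of_nonneg_right h2 hp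
    _ ≤ Stirling.stirlingSeq (m+1) * (Real.sqrt (2 * ((m+1:ℕ):ℝ)) * (((m+1:ℕ):ℝ) / Real.exp 1) ^ (m+1)) := by
        apply mul_le_mul_of_nonneg_right (le_trans hπ h1); positivity

lemma stirling_upper (n : ℕ) (hn : 1 ≤ n) :
    (n.factorial : ℝ) ≤ Real.exp 1 * Real.sqrt n * ((n : ℝ) / Real.exp 1) ^ n := by
  obtain ⟨m, rfl⟩ := Nat.exists_eq_add_of_le' hn
  rw [fact_eq _ (by omega)]
  have h1 := stirlingSeq_le m
  have h2 : Real.sqrt (2 * ((m+1:ℕ):ℝ)) = Real.sqrt 2 * Real.sqrt ((m+1:ℕ):ℝ) := by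
    rw [Real.sqrt_mul (by norm_num)]
  have hp : (0:ℝ) ≤ Real.sqrt (2 * ((m+1:ℕ):ℝ)) * (((m+1 : ℕ) : ℝ) / Real.exp 1) ^ (m+1) := by positivity
  calc Stirling.stirlingSeq (m+1) * (Real.sqrt (2 * ((m+1:ℕ):ℝ)) * (((m+1:ℕ):ℝ) / Real.exp 1) ^ (m+1))
      ≤ (Real.exp 1 / Real.sqrt 2) * (Real.sqrt (2 * ((m+1:ℕ):ℝ)) * (((m+1:ℕ):ℝ) / Real.exp 1) ^ (m+1)) :=
        mul_le_mul_of_nonneg_right h1 hp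
    _ = Real.exp 1 * Real.sqrt ((m+1:ℕ):ℝ) * (((m+1:ℕ):ℝ) / Real.exp 1) ^ (m+1) := by
        rw [h2]; field_simp

lemma choose_le_stirling (d k : ℕ) (hd : 1 ≤ d) (hk : 1 ≤ k) :
    (((k + d).choose k : ℕ) : ℝ) ≤
      Real.exp 1 * Real.sqrt ((k : ℝ) + d) / (Real.sqrt k * Real.sqrt d) *
        (((k : ℝ) + d) ^ (k + d) / ((k : ℝ) ^ k * (d : ℝ) ^ d)) := by
  have hK : (0:ℝ) < (k:ℝ) := by exact_mod_cast hk
  have hD : (0:ℝ) < (d:ℝ) := by exact_mod_cast hd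
  have hS : (0:ℝ) < (k:ℝ) + d := by linarith
  have hcast : (((k + d).choose k : ℕ) : ℝ) =
      ((k+d).factorial : ℝ) / ((k.factorial : ℝ) * (d.factorial : ℝ)) := by
    have h := Nat.choose_mul_factorial_mul_factorial (Nat.le_add_right k d)
    have h2 : k + d - k = d := by omega
    rw [h2] at h
    have := congrArg (fun n : ℕ => (n : ℝ)) h
    push_cast at this
    field_simp
    linarith [this]
  rw [hcast]
  have hup := stirling_upper (k + d) (by omega)
  have hlk := stirling_lower k hk
  have hld := stirling_lower d hd
  have hcastS : ((k + d : ℕ) : ℝ) = (k : ℝ) + d := by push_cast; ring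
  rw [hcastS] at hup
  have hdenpos : (0:ℝ) < Real.sqrt k * ((k : ℝ) / Real.exp 1) ^ k *
      (Real.sqrt d * ((d : ℝ) / Real.exp 1) ^ d) := by positivity
  have step : ((k+d).factorial : ℝ) / ((k.factorial : ℝ) * (d.factorial : ℝ)) ≤
      (Real.exp 1 * Real.sqrt ((k:ℝ)+d) * (((k:ℝ)+d) / Real.exp 1) ^ (k+d)) /
      (Real.sqrt k * ((k : ℝ) / Real.exp 1) ^ k *
        (Real.sqrt d * ((d : ℝ) / Real.exp 1) ^ d)) := by
    apply div_le_div₀ (by positivity) hup hdenpos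
    exact mul_le_mul hlk hld (by positivity) (le_trans (by positivity) hlk)
  refine le_trans step (le_of_eq ?_)
  rw [div_pow, div_pow, div_pow, pow_add (Real.exp 1)]
  have h1 : Real.sqrt k ≠ 0 := by positivity
  have h2 : Real.sqrt d ≠ 0 := by positivity
  have h3 : Real.exp 1 ≠ 0 := Real.exp_ne_zero 1
  have h4 : (k:ℝ)^k ≠ 0 := by positivity
  have h5 : (d:ℝ)^d ≠ 0 := by positivity
  have h6 : Real.exp 1 ^ k ≠ 0 := by positivity
  have h7 : Real.exp 1 ^ d ≠ 0 := by positivity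
  field_simp

lemma nuNT_eq (d k : ℕ) (hd : 1 ≤ d) (hk : 1 ≤ k) :
    nuNT d k = (d:ℝ)^(d:ℕ) * ((k:ℝ)^(k:ℕ) / (k:ℝ)^2) *
      (1 / (((k:ℝ)+(d:ℝ))^(k+d) * ((k:ℝ)+(d:ℝ)))) *
      ((k:ℝ)^2 + (k:ℝ)*(d:ℝ) + (d:ℝ)) := by
  have hK : (0:ℝ) < (k:ℝ) := by exact_mod_cast hk
  have hS : (0:ℝ) < (k:ℝ) + d := by positivity
  unfold nuNT
  rw [Real.rpow_sub hK, Real.rpow_neg hS.le, Real.rpow_add hS, Real.rpow_one]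
  rw [Real.rpow_natCast, Real.rpow_natCast]
  have : ((k:ℝ)+(d:ℝ)) ^ ((k:ℝ)+(d:ℝ)) = ((k:ℝ)+(d:ℝ)) ^ (k+d : ℕ) := by
    rw [← Real.rpow_natCast _ (k+d)]; push_cast; ring_nf
  rw [this]
  have h2 : (k:ℝ) ^ (2:ℝ) = (k:ℝ)^2 := by
    rw [show (2:ℝ) = ((2:ℕ):ℝ) by norm_num, Real.rpow_natCast]
  rw [h2]
  field_simp

lemma term_le (d k : ℕ) (hd : 1 ≤ d) (hk : 1 ≤ k) :
    (Nsph d k : ℝ) * nuNT d k ≤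
      2 * Real.exp 1 * ((1 / Real.sqrt d + 1 / Real.sqrt k) / k) := by
  have hK : (0:ℝ) < (k:ℝ) := by exact_mod_cast hk
  have hD : (0:ℝ) < (d:ℝ) := by exact_mod_cast hd
  have hS : (0:ℝ) < (k:ℝ) + d := by linarith
  have hnu : 0 ≤ nuNT d k := by rw [nuNT_eq d k hd hk]; positivity
  have hN : (Nsph d k : ℝ) ≤ (((k + d).choose k : ℕ) : ℝ) := by
    have : Nsph d k ≤ (k + d).choose k := by
      unfold Nsph; rw [if_neg (by omega)]; exact Nat.sub_le _ _
    exact_mod_cast this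
  have step1 : (Nsph d k : ℝ) * nuNT d k ≤
      (Real.exp 1 * Real.sqrt ((k : ℝ) + d) / (Real.sqrt k * Real.sqrt d) *
        (((k : ℝ) + d) ^ (k + d) / ((k : ℝ) ^ k * (d : ℝ) ^ d))) * nuNT d k :=
    mul_le_mul_of_nonneg_right (le_trans hN (choose_le_stirling d k hd hk)) hnu
  have step2 : (Real.exp 1 * Real.sqrt ((k : ℝ) + d) / (Real.sqrt k * Real.sqrt d) *
        (((k : ℝ) + d) ^ (k + d) / ((k : ℝ) ^ k * (d : ℝ) ^ d))) * nuNT d k =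
      Real.exp 1 * Real.sqrt ((k:ℝ)+d) / (Real.sqrt k * Real.sqrt d) *
        (((k:ℝ)^2 + (k:ℝ)*(d:ℝ) + (d:ℝ)) / ((k:ℝ)^2 * ((k:ℝ)+d))) := by
    rw [nuNT_eq d k hd hk]
    have h1 : Real.sqrt k ≠ 0 := by positivity
    have h2 : Real.sqrt d ≠ 0 := by positivity
    have h4 : (k:ℝ)^k ≠ 0 := by positivity
    have h5 : (d:ℝ)^d ≠ 0 := by positivity
    have h6 : ((k:ℝ)+d)^(k+d) ≠ 0 := by positivity
    field_simp
  have step3 : Real.exp 1 * Real.sqrt ((k:ℝ)+d) / (Real.sqrt k * Real.sqrt d) *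
        (((k:ℝ)^2 + (k:ℝ)*(d:ℝ) + (d:ℝ)) / ((k:ℝ)^2 * ((k:ℝ)+d))) ≤
      Real.exp 1 * (Real.sqrt k + Real.sqrt d) / (Real.sqrt k * Real.sqrt d) *
        ((2 * (k:ℝ) * ((k:ℝ)+d)) / ((k:ℝ)^2 * ((k:ℝ)+d))) := by
    have hle1 : Real.sqrt ((k:ℝ)+d) ≤ Real.sqrt k + Real.sqrt d := by
      have h := Real.sqrt_le_sqrt (show (k:ℝ)+d ≤ (Real.sqrt k + Real.sqrt d)^2 by
        nlinarith [Real.sq_sqrt hK.le, Real.sq_sqrt hD.le, Real.sqrt_nonneg (k:ℝ),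
          Real.sqrt_nonneg (d:ℝ), mul_nonneg (Real.sqrt_nonneg (k:ℝ)) (Real.sqrt_nonneg (d:ℝ))])
      rwa [Real.sqrt_sq (by positivity)] at h
    have hK1 : (1:ℝ) ≤ (k:ℝ) := by exact_mod_cast hk
    have hle2 : (k:ℝ)^2 + (k:ℝ)*(d:ℝ) + (d:ℝ) ≤ 2 * (k:ℝ) * ((k:ℝ)+d) := by
      have : (d:ℝ) ≤ (k:ℝ) * ((k:ℝ)+d) := by nlinarith
      nlinarith
    gcongr
  have step4 : Real.exp 1 * (Real.sqrt k + Real.sqrt d) / (Real.sqrt k * Real.sqrt d) *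
        ((2 * (k:ℝ) * ((k:ℝ)+d)) / ((k:ℝ)^2 * ((k:ℝ)+d))) =
      2 * Real.exp 1 * ((1 / Real.sqrt d + 1 / Real.sqrt k) / k) := by
    have h1 : Real.sqrt k ≠ 0 := by positivity
    have h2 : Real.sqrt d ≠ 0 := by positivity
    field_simp
  linarith [step1, step2 ▸ step1, step3, step4]

/-- An absolute constant C > 0 and D such that for all d ≥ D, the sum over all integers k
with d^0.99 ≤ k ≤ d^1.01 of N(d,k)·ν_d(k) is at most C·d^(−0.455). -/
theorem middle_sum_Nsph_mul_nuNT_le :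
    ∃ C : ℝ, 0 < C ∧ ∃ D : ℕ, ∀ d : ℕ, D ≤ d →
      ∑ k ∈ Finset.Icc ⌈(d : ℝ) ^ (0.99 : ℝ)⌉₊ ⌊(d : ℝ) ^ (1.01 : ℝ)⌋₊,
          (Nsph d k : ℝ) * nuNT d k ≤
        C * (d : ℝ) ^ (-(0.455 : ℝ)) := by
  refine ⟨4 * Real.exp 1, by positivity, 1, fun d hd => ?_⟩
  have hD : (0:ℝ) < (d:ℝ) := by exact_mod_cast hd
  have hD1 : (1:ℝ) ≤ (d:ℝ) := by exact_mod_cast hd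
  set K0 : ℕ := ⌈(d : ℝ) ^ (0.99 : ℝ)⌉₊ with hK0def
  set K1 : ℕ := ⌊(d : ℝ) ^ (1.01 : ℝ)⌋₊ with hK1def
  have hK0pos : 1 ≤ K0 := by
    rw [hK0def]; rw [Nat.one_le_ceil_iff]; positivity
  have hK0real : (d : ℝ) ^ (0.99 : ℝ) ≤ (K0 : ℝ) := Nat.le_ceil _
  have hK0posR : (0:ℝ) < (K0:ℝ) := by
    have : (0:ℝ) < (d:ℝ) ^ (0.99:ℝ) := by positivity
    linarith
  have hK0led : K0 ≤ d := by
    rw [hK0def]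
    apply Nat.ceil_le.mpr
    calc (d:ℝ) ^ (0.99:ℝ) ≤ (d:ℝ) ^ (1:ℝ) :=
          Real.rpow_le_rpow_of_exponent_le hD1 (by norm_num)
      _ = (d:ℝ) := Real.rpow_one _
  have hK1real : (K1 : ℝ) ≤ (d : ℝ) ^ (1.01 : ℝ) := Nat.floor_le (by positivity)
  -- per-term bound
  have hterm : ∀ k ∈ Finset.Icc K0 K1, (Nsph d k : ℝ) * nuNT d k ≤
      4 * Real.exp 1 / ((K0:ℝ) * Real.sqrt K0) := by
    intro k hkmem
    rw [Finset.mem_Icc] at hkmem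
    have hk1 : 1 ≤ k := le_trans hK0pos hkmem.1
    have hKk : (K0:ℝ) ≤ (k:ℝ) := by exact_mod_cast hkmem.1
    have hkR : (0:ℝ) < (k:ℝ) := by exact_mod_cast hk1
    have hsK0 : (0:ℝ) < Real.sqrt K0 := Real.sqrt_pos.mpr hK0posR
    refine le_trans (term_le d k hd hk1) ?_
    have h1 : 1 / Real.sqrt d ≤ 1 / Real.sqrt K0 := by
      apply one_div_le_one_div_of_le hsK0
      exact Real.sqrt_le_sqrt (by exact_mod_cast hK0led)
    have h2 : 1 / Real.sqrt k ≤ 1 / Real.sqrt K0 := by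
      apply one_div_le_one_div_of_le hsK0
      exact Real.sqrt_le_sqrt hKk
    calc 2 * Real.exp 1 * ((1 / Real.sqrt d + 1 / Real.sqrt k) / k)
        ≤ 2 * Real.exp 1 * ((1 / Real.sqrt K0 + 1 / Real.sqrt K0) / K0) := by
          gcongr
      _ = 4 * Real.exp 1 / ((K0:ℝ) * Real.sqrt K0) := by
          field_simp; ring
  have hsum := Finset.sum_le_card_nsmul _ _ _ hterm
  rw [nsmul_eq_mul] at hsum
  have hcard : ((Finset.Icc K0 K1).card : ℝ) ≤ (K1 : ℝ) := by
    rw [Nat.card_Icc]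
    have : K1 + 1 - K0 ≤ K1 := by omega
    exact_mod_cast this
  have hbpos : (0:ℝ) ≤ 4 * Real.exp 1 / ((K0:ℝ) * Real.sqrt K0) := by positivity
  have hsum2 : ∑ k ∈ Finset.Icc K0 K1, (Nsph d k : ℝ) * nuNT d k ≤
      (K1:ℝ) * (4 * Real.exp 1 / ((K0:ℝ) * Real.sqrt K0)) :=
    le_trans hsum (mul_le_mul_of_nonneg_right hcard hbpos)
  -- lower bound K0 * sqrt K0 ≥ d^1.485
  have hsqrtK0 : (d:ℝ) ^ (0.495:ℝ) ≤ Real.sqrt K0 := by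
    have : Real.sqrt ((d:ℝ) ^ (0.99:ℝ)) ≤ Real.sqrt K0 := Real.sqrt_le_sqrt hK0real
    refine le_trans (le_of_eq ?_) this
    rw [Real.sqrt_eq_rpow, ← Real.rpow_mul hD.le]
    norm_num
  have hden : (d:ℝ) ^ (1.485:ℝ) ≤ (K0:ℝ) * Real.sqrt K0 := by
    have : (d:ℝ) ^ (1.485:ℝ) = (d:ℝ) ^ (0.99:ℝ) * (d:ℝ) ^ (0.495:ℝ) := by
      rw [← Real.rpow_add hD]; norm_num
    rw [this]
    exact mul_le_mul hK0real hsqrtK0 (by positivity) hK0posR.le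
  have hdenpos : (0:ℝ) < (d:ℝ) ^ (1.485:ℝ) := by positivity
  have hfinal : (K1:ℝ) * (4 * Real.exp 1 / ((K0:ℝ) * Real.sqrt K0)) ≤
      (d:ℝ) ^ (1.01:ℝ) * (4 * Real.exp 1 / (d:ℝ) ^ (1.485:ℝ)) := by
    apply mul_le_mul hK1real _ (by positivity) (by positivity)
    apply div_le_div_of_nonneg_left (by positivity) (by positivity) hden
  have heq : (d:ℝ) ^ (1.01:ℝ) * (4 * Real.exp 1 / (d:ℝ) ^ (1.485:ℝ)) =
      4 * Real.exp 1 * (d:ℝ) ^ (-(0.475):ℝ) := by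
    rw [mul_div_assoc', mul_comm ((d:ℝ) ^ (1.01:ℝ)), mul_div_assoc,
      ← Real.rpow_sub hD]
    norm_num
  have hlast : (4:ℝ) * Real.exp 1 * (d:ℝ) ^ (-(0.475):ℝ) ≤
      4 * Real.exp 1 * (d:ℝ) ^ (-(0.455):ℝ) := by
    gcongr
    · norm_num
  calc ∑ k ∈ Finset.Icc K0 K1, (Nsph d k : ℝ) * nuNT d k
      ≤ (K1:ℝ) * (4 * Real.exp 1 / ((K0:ℝ) * Real.sqrt K0)) := hsum2
    _ ≤ (d:ℝ) ^ (1.01:ℝ) * (4 * Real.exp 1 / (d:ℝ) ^ (1.485:ℝ)) := hfinal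
    _ = 4 * Real.exp 1 * (d:ℝ) ^ (-(0.475):ℝ) := heq
    _ ≤ 4 * Real.exp 1 * (d:ℝ) ^ (-(0.455):ℝ) := hlast
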